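/- Let d ≥ 1, let M be a natural number, and let c > 0. Let φ : ℝ^d → ℂ be a Schwartz function such that ∫_{ℝ^d} y^α φ(y) dy = 0 for every multi-index α with |α| ≤ 2M. Then there is a constant C > 0 such that for all t ≥ 1 and all x ∈ ℝ^d: | ∫_{ℝ^d} e^{ i |x−y|² / (4t) } φ(y) dy | ≤ C · e^{c|x|} · t^{−M}. -/

import Mathlib

open Real MeasureTheory

section Aux
open Complex Finset

private lemma expDeriv (n : ℕ) (z : ℂ) :
    HasDerivAt (fun w : ℂ => Complex.exp (I * w) - ∑ k ∈ range (n+1), I^k / k.factorial * w^k)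
      (I * (Complex.exp (I * z) - ∑ k ∈ range n, I^k / k.factorial * z^k)) z := by
  have h1 : HasDerivAt (fun w : ℂ => Complex.exp (I * w)) (Complex.exp (I * z) * I) z := by
    simpa using ((hasDerivAt_id z).const_mul I).cexp
  have h2 : HasDerivAt (fun w : ℂ => ∑ k ∈ range (n+1), I^k / k.factorial * w^k)
      (∑ k ∈ range (n+1), I^k / k.factorial * (k * z^(k-1))) z :=
    HasDerivAt.fun_sum fun k _ => (hasDerivAt_pow k z).const_mul _
  have h3 : (∑ k ∈ range (n+1), I^k / k.factorial * (k * z^(k-1)))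
      = I * ∑ k ∈ range n, I^k / k.factorial * z^k := by
    rw [Finset.sum_range_succ', Finset.mul_sum]
    simp only [Nat.factorial_succ, pow_succ, Nat.add_sub_cancel, Nat.cast_zero, mul_zero,
      zero_mul, add_zero, Nat.cast_mul, Nat.cast_add, Nat.cast_one]
    refine Finset.sum_congr rfl fun k _ => ?_
    have hk : ((k:ℂ) + 1) ≠ 0 := Nat.cast_add_one_ne_zero k
    have hf : ((k.factorial : ℂ)) ≠ 0 := by exact_mod_cast k.factorial_ne_zero
    field_simp
  have := h1.fun_sub h2
  rw [h3] at this
  rw [show I * (Complex.exp (I * z) - ∑ k ∈ range n, I^k / k.factorial * z^k)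
      = Complex.exp (I * z) * I - I * ∑ k ∈ range n, I^k / k.factorial * z^k by ring]
  exact this

private lemma tailBound (n : ℕ) : ∀ s : ℝ,
    ‖Complex.exp (I * (s:ℂ)) - ∑ k ∈ range n, I^k / k.factorial * (s:ℂ)^k‖ ≤ |s| ^ n := by
  induction n with
  | zero => intro s; simp [Complex.norm_exp]
  | succ n ih =>
    intro s
    set F : ℝ → ℂ := fun u => Complex.exp (I * (u:ℂ)) - ∑ k ∈ range (n+1), I^k / k.factorial * (u:ℂ)^k with hF
    have hcont : Continuous fun u : ℝ =>
        I * (Complex.exp (I * (u:ℂ)) - ∑ k ∈ range n, I^k / k.factorial * (u:ℂ)^k) := by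
      fun_prop
    have hftc : ∫ u in (0:ℝ)..s,
        I * (Complex.exp (I * (u:ℂ)) - ∑ k ∈ range n, I^k / k.factorial * (u:ℂ)^k)
        = F s - F 0 := by
      refine intervalIntegral.integral_eq_sub_of_hasDerivAt (fun u _ => ?_)
        (hcont.intervalIntegrable _ _)
      exact (expDeriv n u).comp_ofReal
    have hF0 : F 0 = 0 := by
      simp [hF, Finset.sum_range_succ']
    have hnorm : ‖∫ u in (0:ℝ)..s,
        I * (Complex.exp (I * (u:ℂ)) - ∑ k ∈ range n, I^k / k.factorial * (u:ℂ)^k)‖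
        ≤ |s|^n * |s - 0| := by
      refine intervalIntegral.norm_integral_le_of_norm_le_const fun u hu => ?_
      have hus : |u| ≤ |s| := by
        rcases Set.mem_uIoc.1 hu with h | h
        · rw [_root_.abs_of_pos h.1, _root_.abs_of_nonneg (le_trans h.1.le h.2)]; exact h.2
        · rw [_root_.abs_of_nonpos h.2, _root_.abs_of_neg (h.1.trans_le h.2)]; linarith [h.1]
      calc ‖I * (Complex.exp (I * (u:ℂ)) - ∑ k ∈ range n, I^k / k.factorial * (u:ℂ)^k)‖
          = ‖Complex.exp (I * (u:ℂ)) - ∑ k ∈ range n, I^k / k.factorial * (u:ℂ)^k‖ := by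
            rw [norm_mul]; simp
        _ ≤ |u|^n := ih u
        _ ≤ |s|^n := pow_le_pow_left₀ (abs_nonneg u) hus n
    rw [hftc, hF0, sub_zero] at hnorm
    calc ‖F s‖ ≤ |s|^n * |s - 0| := hnorm
      _ = |s|^(n+1) := by rw [sub_zero, pow_succ]

private lemma coord_abs_le_norm {d : ℕ} (y : EuclideanSpace ℝ (Fin d)) (i : Fin d) :
    |y i| ≤ ‖y‖ := by
  rw [EuclideanSpace.norm_eq]
  rw [show |y i| = Real.sqrt ((y i)^2) by rw [Real.sqrt_sq_eq_abs]]
  apply Real.sqrt_le_sqrt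
  have : (y i)^2 = ‖y i‖^2 := by rw [Real.norm_eq_abs, _root_.sq_abs]
  rw [this]
  exact Finset.single_le_sum (fun j _ => sq_nonneg ‖y j‖) (Finset.mem_univ i)

private lemma integrable_monomial {d : ℕ} (φ : SchwartzMap (EuclideanSpace ℝ (Fin d)) ℂ)
    (α : Fin d → ℕ) :
    Integrable (fun y : EuclideanSpace ℝ (Fin d) => ((∏ i, (y i) ^ (α i) : ℝ) : ℂ) * φ y) := by
  refine (φ.integrable_pow_mul volume (∑ i, α i)).mono' ?_ ?_
  · apply Continuous.aestronglyMeasurable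
    have hc : ∀ i : Fin d, Continuous fun y : EuclideanSpace ℝ (Fin d) => y i :=
      fun i => (EuclideanSpace.proj (𝕜 := ℝ) i).continuous
    fun_prop
  · filter_upwards with y
    rw [norm_mul, Complex.norm_real, Real.norm_eq_abs]
    gcongr
    calc |∏ i, (y i) ^ (α i)| = ∏ i, |y i| ^ (α i) := by
          rw [Finset.abs_prod]; exact Finset.prod_congr rfl fun i _ => (abs_pow _ _)
      _ ≤ ∏ i, ‖y‖ ^ (α i) := by
          exact Finset.prod_le_prod (fun i _ => by positivity)
            (fun i _ => pow_le_pow_left₀ (abs_nonneg _) (coord_abs_le_norm y i) _)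
      _ = ‖y‖ ^ (∑ i, α i) := by rw [Finset.prod_pow_eq_pow_sum]

private lemma eval_as {d : ℕ} (p : MvPolynomial (Fin d) ℂ) (y : EuclideanSpace ℝ (Fin d)) :
    MvPolynomial.eval (fun i => ((y i : ℝ) : ℂ)) p
      = ∑ v ∈ p.support, MvPolynomial.coeff v p * ((∏ i, (y i) ^ (v i) : ℝ) : ℂ) := by
  conv_lhs => rw [p.as_sum]
  rw [map_sum]
  refine Finset.sum_congr rfl fun v _ => ?_
  rw [MvPolynomial.eval_monomial]
  rw [Finsupp.prod_fintype _ _ (fun i => pow_zero _)]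
  push_cast
  rfl

private lemma integrable_polyeval {d : ℕ} (φ : SchwartzMap (EuclideanSpace ℝ (Fin d)) ℂ)
    (p : MvPolynomial (Fin d) ℂ) :
    Integrable (fun y : EuclideanSpace ℝ (Fin d) =>
      MvPolynomial.eval (fun i => ((y i : ℝ) : ℂ)) p * φ y) := by
  have : (fun y : EuclideanSpace ℝ (Fin d) =>
      MvPolynomial.eval (fun i => ((y i : ℝ) : ℂ)) p * φ y)
      = fun y => ∑ v ∈ p.support,
          MvPolynomial.coeff v p * (((∏ i, (y i) ^ (v i) : ℝ) : ℂ) * φ y) := by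
    funext y
    rw [eval_as, Finset.sum_mul]
    exact Finset.sum_congr rfl fun v _ => by ring
  rw [this]
  exact integrable_finset_sum _ fun v _ => (integrable_monomial φ _).const_mul _

private lemma integral_polyeval_zero {d : ℕ} {M : ℕ}
    (φ : SchwartzMap (EuclideanSpace ℝ (Fin d)) ℂ)
    (hmom : ∀ α : Fin d → ℕ, (∑ i, α i) ≤ 2 * M →
      ∫ y : EuclideanSpace ℝ (Fin d), ((∏ i, (y i) ^ (α i) : ℝ) : ℂ) * φ y = 0)
    (p : MvPolynomial (Fin d) ℂ) (hp : p.totalDegree ≤ 2 * M) :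
    ∫ y : EuclideanSpace ℝ (Fin d),
      MvPolynomial.eval (fun i => ((y i : ℝ) : ℂ)) p * φ y = 0 := by
  have heq : (fun y : EuclideanSpace ℝ (Fin d) =>
      MvPolynomial.eval (fun i => ((y i : ℝ) : ℂ)) p * φ y)
      = fun y => ∑ v ∈ p.support,
          MvPolynomial.coeff v p * (((∏ i, (y i) ^ (v i) : ℝ) : ℂ) * φ y) := by
    funext y
    rw [eval_as, Finset.sum_mul]
    exact Finset.sum_congr rfl fun v _ => by ring
  rw [heq, integral_finset_sum _ fun v _ => (integrable_monomial φ _).const_mul _]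
  refine Finset.sum_eq_zero fun v hv => ?_
  rw [MeasureTheory.integral_const_mul]
  have hdeg : (∑ i, v i) ≤ 2 * M := by
    refine le_trans ?_ ((MvPolynomial.le_totalDegree hv).trans hp)
    rw [Finsupp.sum_fintype _ _ (fun i => rfl)]
  rw [hmom (fun i => v i) hdeg, mul_zero]

private lemma add_pow_le' (a b : ℝ) (ha : 0 ≤ a) (hb : 0 ≤ b) (n : ℕ) :
    (a + b)^n ≤ 2^n * (a^n + b^n) := by
  have h1 : a + b ≤ 2 * max a b := by
    rcases le_total a b with h | h
    · simp [max_eq_right h]; linarith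
    · simp [max_eq_left h]; linarith
  calc (a+b)^n ≤ (2 * max a b)^n := by
        apply pow_le_pow_left₀ (by positivity) h1
    _ = 2^n * (max a b)^n := mul_pow _ _ _
    _ ≤ 2^n * (a^n + b^n) := by
        gcongr
        rcases max_cases a b with ⟨h, _⟩ | ⟨h, _⟩ <;> rw [h]
        · exact le_add_of_nonneg_right (by positivity)
        · exact le_add_of_nonneg_left (by positivity)

private lemma norm_sq_eq' {d : ℕ} (v : EuclideanSpace ℝ (Fin d)) :
    ‖v‖^2 = ∑ i, (v i)^2 := by
  rw [EuclideanSpace.norm_eq, Real.sq_sqrt (by positivity)]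
  exact Finset.sum_congr rfl fun i _ => by rw [Real.norm_eq_abs, _root_.sq_abs]

private noncomputable def Pxt {d : ℕ} (t : ℝ) (x : EuclideanSpace ℝ (Fin d)) :
    MvPolynomial (Fin d) ℂ :=
  MvPolynomial.C (((4*t)⁻¹ : ℝ) : ℂ) * ∑ i, (MvPolynomial.C ((x i : ℝ):ℂ) - MvPolynomial.X i)^2

private lemma evalP {d : ℕ} (t : ℝ) (x y : EuclideanSpace ℝ (Fin d)) :
    MvPolynomial.eval (fun i => ((y i : ℝ) : ℂ)) (Pxt t x)
      = ((‖x - y‖^2 / (4*t) : ℝ) : ℂ) := by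
  have hn : ‖x - y‖^2 = ∑ i, (x i - y i)^2 := by
    rw [norm_sq_eq']; exact Finset.sum_congr rfl fun i _ => by rw [PiLp.sub_apply]
  rw [Pxt, map_mul, MvPolynomial.eval_C, map_sum]
  have : ∀ i : Fin d, MvPolynomial.eval (fun i => ((y i : ℝ) : ℂ))
      ((MvPolynomial.C ((x i : ℝ):ℂ) - MvPolynomial.X i)^2) = ((x i : ℂ) - (y i : ℂ))^2 := by
    intro i; rw [map_pow, map_sub, MvPolynomial.eval_C, MvPolynomial.eval_X]
  rw [Finset.sum_congr rfl fun i _ => this i]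
  push_cast [hn]
  ring

private lemma degP {d : ℕ} (t : ℝ) (x : EuclideanSpace ℝ (Fin d)) :
    (Pxt t x).totalDegree ≤ 2 := by
  rw [Pxt]
  refine le_trans (MvPolynomial.totalDegree_mul _ _) ?_
  rw [MvPolynomial.totalDegree_C, zero_add]
  refine MvPolynomial.totalDegree_finsetSum_le fun i _ => ?_
  refine le_trans (MvPolynomial.totalDegree_pow _ _) ?_
  have : (MvPolynomial.C ((x i : ℝ):ℂ) - MvPolynomial.X i).totalDegree ≤ 1 := by
    rw [sub_eq_add_neg]
    refine le_trans (MvPolynomial.totalDegree_add _ _) ?_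
    rw [MvPolynomial.totalDegree_C, MvPolynomial.totalDegree_neg, MvPolynomial.totalDegree_X]
    simp
  omega

end Aux

theorem stmt_13 (d : ℕ) (hd : 1 ≤ d) (M : ℕ) (c : ℝ) (hc : 0 < c)
    (φ : SchwartzMap (EuclideanSpace ℝ (Fin d)) ℂ)
    (hmom : ∀ α : Fin d → ℕ, (∑ i, α i) ≤ 2 * M →
      ∫ y : EuclideanSpace ℝ (Fin d), ((∏ i, (y i) ^ (α i) : ℝ) : ℂ) * φ y = 0) :
    ∃ C : ℝ, 0 < C ∧ ∀ t : ℝ, 1 ≤ t → ∀ x : EuclideanSpace ℝ (Fin d),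
      ‖∫ y : EuclideanSpace ℝ (Fin d),
          Complex.exp (Complex.I * ((‖x - y‖ ^ 2 / (4 * t) : ℝ) : ℂ)) * φ y‖
        ≤ C * Real.exp (c * ‖x‖) * t ^ (-(M : ℝ)) := by
  classical
  set E := EuclideanSpace ℝ (Fin d)
  set N := M + 1 with hN
  set A0 : ℝ := ∫ y : E, ‖φ y‖ with hA0def
  set A1 : ℝ := ∫ y : E, ‖y‖ ^ (2*N) * ‖φ y‖ with hA1def
  set K : ℝ := (2*N).factorial / c ^ (2*N) with hKdef
  have hA0 : 0 ≤ A0 := integral_nonneg fun y => norm_nonneg _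
  have hA1 : 0 ≤ A1 := integral_nonneg fun y => by positivity
  have hK : 0 < K := by positivity
  refine ⟨K * A0 + A1 + 1, by positivity, ?_⟩
  intro t ht x
  have ht0 : (0:ℝ) < t := lt_of_lt_of_le one_pos ht
  set s : E → ℝ := fun y => ‖x - y‖ ^ 2 / (4 * t) with hsdef
  have hs_nonneg : ∀ y, 0 ≤ s y := fun y => by positivity
  have hs_cont : Continuous s := by
    apply Continuous.div_const
    exact ((continuous_const.sub continuous_id).norm.pow 2)
  -- integrals of powers of s against φ
  have hevalk : ∀ (k : ℕ) (y : E),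
      MvPolynomial.eval (fun i => ((y i : ℝ) : ℂ)) ((Pxt t x) ^ k) = ((s y : ℝ) : ℂ) ^ k := by
    intro k y
    rw [map_pow, evalP]
  have hint : ∀ k : ℕ, Integrable (fun y : E => ((s y : ℝ) : ℂ) ^ k * φ y) := by
    intro k
    have := integrable_polyeval φ ((Pxt t x) ^ k)
    refine this.congr ?_
    filter_upwards with y
    rw [hevalk]
  have hzero : ∀ k : ℕ, k ≤ M → ∫ y : E, ((s y : ℝ) : ℂ) ^ k * φ y = 0 := by
    intro k hk
    have hdeg : ((Pxt t x) ^ k).totalDegree ≤ 2 * M := by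
      refine le_trans (MvPolynomial.totalDegree_pow _ _) ?_
      have := degP t x
      calc k * (Pxt t x).totalDegree ≤ k * 2 := by exact Nat.mul_le_mul_left k this
        _ ≤ 2 * M := by omega
    have h0 := integral_polyeval_zero φ hmom ((Pxt t x) ^ k) hdeg
    rw [← h0]
    refine integral_congr_ae ?_
    filter_upwards with y
    rw [hevalk]
  -- f and g
  set f : E → ℂ := fun y => Complex.exp (Complex.I * ((s y : ℝ) : ℂ)) with hfdef
  set g : E → ℂ := fun y => ∑ k ∈ Finset.range N,
      Complex.I ^ k / (k.factorial : ℂ) * ((s y : ℝ) : ℂ) ^ k with hgdef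
  have hf_int : Integrable (fun y : E => f y * φ y) := by
    refine (φ.integrable (μ := volume)).norm.mono' ?_ ?_
    · apply Continuous.aestronglyMeasurable
      exact (Complex.continuous_exp.comp
        (continuous_const.mul (Complex.continuous_ofReal.comp hs_cont))).mul φ.continuous
    · filter_upwards with y
      rw [norm_mul]
      have : ‖f y‖ = 1 := by
        rw [hfdef]
        simp [Complex.norm_exp]
      rw [this, one_mul]
  have hg_eq : (fun y : E => g y * φ y) = fun y => ∑ k ∈ Finset.range N,
      Complex.I ^ k / (k.factorial : ℂ) * (((s y : ℝ) : ℂ) ^ k * φ y) := by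
    funext y
    rw [hgdef, Finset.sum_mul]
    exact Finset.sum_congr rfl fun k _ => by ring
  have hg_int : Integrable (fun y : E => g y * φ y) := by
    rw [hg_eq]
    exact integrable_finset_sum _ fun k _ => (hint k).const_mul _
  have hg_zero : ∫ y : E, g y * φ y = 0 := by
    rw [hg_eq, integral_finset_sum _ fun k _ => (hint k).const_mul _]
    refine Finset.sum_eq_zero fun k hk => ?_
    rw [MeasureTheory.integral_const_mul, hzero k (by
      have := Finset.mem_range.1 hk; omega), mul_zero]
  have hsplit : ∫ y : E, f y * φ y = ∫ y : E, (f y - g y) * φ y := by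
    have : (fun y : E => (f y - g y) * φ y) = fun y => f y * φ y - g y * φ y := by
      funext y; ring
    rw [this, integral_sub hf_int hg_int, hg_zero, sub_zero]
  -- majorant
  have hmaj : Integrable (fun y : E => (‖x‖^(2*N) + ‖y‖^(2*N)) * ‖φ y‖) := by
    have h1 : Integrable (fun y : E => ‖x‖^(2*N) * ‖φ y‖) :=
      (φ.integrable (μ := volume)).norm.const_mul _
    have h2 := φ.integrable_pow_mul volume (2*N)
    simpa [add_mul] using h1.fun_add h2
  have hpoint : ∀ y : E, ‖(f y - g y) * φ y‖
      ≤ (4*t)⁻¹ ^ N * 4 ^ N * ((‖x‖^(2*N) + ‖y‖^(2*N)) * ‖φ y‖) := by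
    intro y
    rw [norm_mul]
    have h1 : ‖f y - g y‖ ≤ |s y| ^ N := tailBound N (s y)
    have h2 : |s y| ^ N ≤ (4*t)⁻¹ ^ N * 4 ^ N * (‖x‖^(2*N) + ‖y‖^(2*N)) := by
      rw [_root_.abs_of_nonneg (hs_nonneg y)]
      have hsle : s y ≤ (4*t)⁻¹ * (‖x‖ + ‖y‖)^2 := by
        rw [hsdef]
        simp only []
        rw [div_eq_inv_mul]
        gcongr
        exact norm_sub_le x y
      calc (s y) ^ N ≤ ((4*t)⁻¹ * (‖x‖ + ‖y‖)^2) ^ N := by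
            exact pow_le_pow_left₀ (hs_nonneg y) hsle N
        _ = (4*t)⁻¹ ^ N * ((‖x‖ + ‖y‖)^(2*N)) := by
            rw [mul_pow, ← pow_mul, mul_comm 2 N]
        _ ≤ (4*t)⁻¹ ^ N * (2^(2*N) * (‖x‖^(2*N) + ‖y‖^(2*N))) := by
            gcongr
            exact add_pow_le' _ _ (norm_nonneg x) (norm_nonneg y) _
        _ = (4*t)⁻¹ ^ N * 4 ^ N * (‖x‖^(2*N) + ‖y‖^(2*N)) := by
            rw [show (2:ℝ)^(2*N) = 4^N by rw [pow_mul]; norm_num]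
            ring
    calc ‖f y - g y‖ * ‖φ y‖ ≤ |s y| ^ N * ‖φ y‖ := by gcongr
      _ ≤ ((4*t)⁻¹ ^ N * 4 ^ N * (‖x‖^(2*N) + ‖y‖^(2*N))) * ‖φ y‖ := by
          gcongr
      _ = (4*t)⁻¹ ^ N * 4 ^ N * ((‖x‖^(2*N) + ‖y‖^(2*N)) * ‖φ y‖) := by ring
  have hbound : ‖∫ y : E, (f y - g y) * φ y‖
      ≤ (4*t)⁻¹ ^ N * 4 ^ N * (‖x‖^(2*N) * A0 + A1) := by
    calc ‖∫ y : E, (f y - g y) * φ y‖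
        ≤ ∫ y : E, (4*t)⁻¹ ^ N * 4 ^ N * ((‖x‖^(2*N) + ‖y‖^(2*N)) * ‖φ y‖) :=
          norm_integral_le_of_norm_le (hmaj.const_mul _) (Filter.Eventually.of_forall hpoint)
      _ = (4*t)⁻¹ ^ N * 4 ^ N * (‖x‖^(2*N) * A0 + A1) := by
          rw [MeasureTheory.integral_const_mul]
          congr 1
          have h1 : Integrable (fun y : E => ‖x‖^(2*N) * ‖φ y‖) :=
            (φ.integrable (μ := volume)).norm.const_mul _
          have h2 := φ.integrable_pow_mul volume (2*N)
          have : (fun y : E => (‖x‖^(2*N) + ‖y‖^(2*N)) * ‖φ y‖)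
              = fun y => ‖x‖^(2*N) * ‖φ y‖ + ‖y‖^(2*N) * ‖φ y‖ := by
            funext y; ring
          rw [this, integral_add h1 h2, MeasureTheory.integral_const_mul]
  -- numerics
  have hxK : ‖x‖ ^ (2*N) ≤ K * Real.exp (c * ‖x‖) := by
    have h := Real.sum_le_exp_of_nonneg (mul_nonneg hc.le (norm_nonneg x)) (2*N+1)
    have h2 : (c * ‖x‖) ^ (2*N) / (2*N).factorial ≤ Real.exp (c * ‖x‖) := by
      refine le_trans ?_ h
      exact Finset.single_le_sum (f := fun i => (c*‖x‖)^i / (i.factorial : ℝ))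
        (fun i _ => by positivity) (Finset.self_mem_range_succ _)
    have hcp : (0:ℝ) < c ^ (2*N) := pow_pos hc _
    rw [hKdef, div_mul_eq_mul_div, le_div_iff₀ hcp]
    calc ‖x‖^(2*N) * c^(2*N) = (c * ‖x‖)^(2*N) := by rw [mul_pow]; ring
      _ ≤ Real.exp (c * ‖x‖) * (2*N).factorial := (div_le_iff₀ (by positivity)).1 h2
      _ = (2*N).factorial * Real.exp (c * ‖x‖) := mul_comm _ _
  have hconst : (4*t)⁻¹ ^ N * 4 ^ N = (t ^ N)⁻¹ := by
    have h1 : (4*t)⁻¹ * 4 = t⁻¹ := by field_simp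
    rw [← mul_pow, h1, inv_pow]
  have htM : t ^ (-(M:ℝ)) = (t ^ M)⁻¹ := by
    rw [Real.rpow_neg ht0.le, Real.rpow_natCast]
  have htNM : (t ^ N)⁻¹ ≤ (t ^ M)⁻¹ := by
    apply inv_anti₀
    · positivity
    · exact pow_le_pow_right₀ ht (by omega)
  have hexp1 : (1:ℝ) ≤ Real.exp (c * ‖x‖) :=
    Real.one_le_exp (by positivity)
  -- assemble
  rw [show ‖∫ y : E, Complex.exp (Complex.I * ((‖x - y‖ ^ 2 / (4 * t) : ℝ) : ℂ)) * φ y‖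
      = ‖∫ y : E, f y * φ y‖ from rfl]
  rw [hsplit]
  calc ‖∫ y : E, (f y - g y) * φ y‖
      ≤ (4*t)⁻¹ ^ N * 4 ^ N * (‖x‖^(2*N) * A0 + A1) := hbound
    _ = (t ^ N)⁻¹ * (‖x‖^(2*N) * A0 + A1) := by rw [hconst]
    _ ≤ (t ^ M)⁻¹ * ((K * A0 + A1 + 1) * Real.exp (c * ‖x‖)) := by
        have hx2 : ‖x‖^(2*N) * A0 + A1 ≤ (K * A0 + A1 + 1) * Real.exp (c * ‖x‖) := by
          have e1 : ‖x‖^(2*N) * A0 ≤ K * Real.exp (c * ‖x‖) * A0 := by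
            apply mul_le_mul_of_nonneg_right hxK hA0
          have e2 : A1 ≤ A1 * Real.exp (c * ‖x‖) :=
            le_mul_of_one_le_right hA1 hexp1
          calc ‖x‖^(2*N) * A0 + A1 ≤ K * Real.exp (c * ‖x‖) * A0 + A1 * Real.exp (c * ‖x‖) := by
                linarith
            _ = (K * A0 + A1) * Real.exp (c * ‖x‖) := by ring
            _ ≤ (K * A0 + A1 + 1) * Real.exp (c * ‖x‖) := by
                apply mul_le_mul_of_nonneg_right _ (Real.exp_nonneg _)
                linarith
        have hnn : (0:ℝ) ≤ (t^M)⁻¹ := by positivity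
        refine mul_le_mul htNM hx2 (by positivity) hnn
    _ = (K * A0 + A1 + 1) * Real.exp (c * ‖x‖) * t ^ (-(M:ℝ)) := by
        rw [htM]; ring
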